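/- For positive definite n×n matrices A and B and 0 ≤ t ≤ 1, d_l(A, A♢_t B) ≤ d_l(A,B), where A♢_t B = (A♯B)♯_t((A+B)/2) is the geodesic from the geometric mean to the arithmetic mean, and d_l is the Log-Determinant metric. -/

import Mathlib

open Matrix ComplexOrder

/-- Matrix power via functional calculus (spectral decomposition), for Hermitian matrices. -/
noncomputable def mpow {n : Type*} [Fintype n] [DecidableEq n]
    (A : Matrix n n ℂ) (p : ℝ) : Matrix n n ℂ :=
  if hA : A.IsHermitian then
    (hA.eigenvectorUnitary : Matrix n n ℂ) *
      Matrix.diagonal (fun i => ((hA.eigenvalues i ^ p : ℝ) : ℂ)) *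
      star (hA.eigenvectorUnitary : Matrix n n ℂ)
  else 0

/-- Hellinger distance. -/
noncomputable def dh {n : Type*} [Fintype n] [DecidableEq n]
    (A B : Matrix n n ℂ) : ℝ :=
  Real.sqrt ((Matrix.trace (A + B)).re
    - 2 * (Matrix.trace (mpow A (1/2) * mpow B (1/2))).re)

/-- Bures–Wasserstein distance. -/
noncomputable def db {n : Type*} [Fintype n] [DecidableEq n]
    (A B : Matrix n n ℂ) : ℝ :=
  Real.sqrt ((Matrix.trace (A + B)).re
    - 2 * (Matrix.trace (mpow (mpow A (1/2) * B * mpow A (1/2)) (1/2))).re)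

/-- Log-determinant distance. -/
noncomputable def dl {n : Type*} [Fintype n] [DecidableEq n]
    (A B : Matrix n n ℂ) : ℝ :=
  Real.log (((A + B) / 2).det).re
    - (1/2) * (Real.log (A.det.re) + Real.log (B.det.re))

/-- Matrix power mean μ_p(t;A,B) = (t A^p + (1-t) B^p)^{1/p}. -/
noncomputable def mpm {n : Type*} [Fintype n] [DecidableEq n]
    (p t : ℝ) (A B : Matrix n n ℂ) : Matrix n n ℂ :=
  mpow ((t : ℂ) • mpow A p + ((1 - t : ℝ) : ℂ) • mpow B p) (1/p)

/-- Weighted geometric mean A ♯_t B. -/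
noncomputable def sharp {n : Type*} [Fintype n] [DecidableEq n]
    (t : ℝ) (A B : Matrix n n ℂ) : Matrix n n ℂ :=
  mpow A (1/2) * mpow (mpow A (-(1/2)) * B * mpow A (-(1/2))) t * mpow A (1/2)

/-- Quantum fidelity. -/
noncomputable def fid {n : Type*} [Fintype n] [DecidableEq n]
    (A B : Matrix n n ℂ) : ℝ :=
  ((Matrix.trace (mpow (mpow A (1/2) * B * mpow A (1/2)) (1/2))).re) ^ 2

section Aux

open Polynomial

set_option linter.unusedSectionVars false

variable {n : Type*} [Fintype n] [DecidableEq n]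




variable {n : Type*} [Fintype n] [DecidableEq n]

lemma aeval_unitary_conj (u M : Matrix n n ℂ) (hu : u ∈ Matrix.unitaryGroup n ℂ) (g : ℂ[X]) :
    aeval (u * M * star u) g = u * aeval M g * star u := by
  have h1 : star u * u = 1 := mem_unitaryGroup_iff'.mp hu
  have h2 : u * star u = 1 := mem_unitaryGroup_iff.mp hu
  have hpow : ∀ k : ℕ, (u * M * star u) ^ k = u * M ^ k * star u := by
    intro k
    induction k with
    | zero => simp [h2]
    | succ k ih =>
      rw [pow_succ, ih]
      calc u * M ^ k * star u * (u * M * star u)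
          = u * M ^ k * (star u * u) * M * star u := by noncomm_ring
        _ = u * (M ^ k * M) * star u := by rw [h1]; noncomm_ring
  induction g using Polynomial.induction_on' with
  | add p q hp hq => simp [map_add, hp, hq, mul_add, add_mul]
  | monomial k a =>
    simp only [aeval_monomial, hpow, Algebra.algebraMap_eq_smul_one, smul_mul_assoc, one_mul,
      mul_smul_comm]

lemma isHermitian_diag_real (d : n → ℝ) :
    (Matrix.diagonal (fun i => (d i : ℂ))).IsHermitian := by
  refine Matrix.isHermitian_diagonal_iff.mpr fun i => ?_
  exact Complex.conj_ofReal _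

lemma isHermitian_conj_diag (u : Matrix n n ℂ) (d : n → ℝ) :
    (u * Matrix.diagonal (fun i => (d i : ℂ)) * star u).IsHermitian := by
  have hd := isHermitian_diag_real (n := n) d
  exact Matrix.isHermitian_mul_mul_conjTranspose u hd

lemma conj_sub_smul {u : Matrix n n ℂ} (h2 : u * star u = 1) (v : n → ℂ) (c : ℂ) :
    u * Matrix.diagonal v * star u - c • (1 : Matrix n n ℂ)
      = u * (Matrix.diagonal v - c • 1) * star u := by
  rw [mul_sub, sub_mul]
  congr 1
  rw [mul_smul_comm, smul_mul_assoc, mul_one, h2]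

lemma det_conj_diag_sub {u : Matrix n n ℂ} (h2 : u * star u = 1) (v : n → ℂ) (c : ℂ) :
    (u * Matrix.diagonal v * star u - c • (1 : Matrix n n ℂ)).det = ∏ i, (v i - c) := by
  have hdu : u.det * (star u).det = 1 := by rw [← det_mul, h2, det_one]
  rw [conj_sub_smul h2]
  have hD : Matrix.diagonal v - c • (1 : Matrix n n ℂ) = Matrix.diagonal (fun i => v i - c) := by
    ext i j
    rcases eq_or_ne i j with h | h <;>
      simp [Matrix.diagonal_apply, Matrix.one_apply, h]
  rw [det_mul, det_mul, hD, det_diagonal]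
  calc u.det * (∏ i, (v i - c)) * (star u).det
      = (u.det * (star u).det) * ∏ i, (v i - c) := by ring
    _ = ∏ i, (v i - c) := by rw [hdu, one_mul]

lemma mpow_conj_diag {u : Matrix n n ℂ} (hu : u ∈ Matrix.unitaryGroup n ℂ)
    (d : n → ℝ) (p : ℝ) :
    mpow (u * Matrix.diagonal (fun i => (d i : ℂ)) * star u) p
      = u * Matrix.diagonal (fun i => ((d i ^ p : ℝ) : ℂ)) * star u := by
  classical
  have h2 : u * star u = 1 := mem_unitaryGroup_iff.mp hu
  set Z := u * Matrix.diagonal (fun i => (d i : ℂ)) * star u with hZdef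
  have hZ : Z.IsHermitian := isHermitian_conj_diag u d
  set u0 : Matrix n n ℂ := (hZ.eigenvectorUnitary : Matrix n n ℂ) with hu0
  have hu0m : u0 ∈ Matrix.unitaryGroup n ℂ := SetLike.coe_mem _
  have h20 : u0 * star u0 = 1 := mem_unitaryGroup_iff.mp hu0m
  set μ := hZ.eigenvalues with hμ
  have hspec : Z = u0 * Matrix.diagonal (fun i => (μ i : ℂ)) * star u0 := by
    have h := hZ.spectral_theorem
    rw [Unitary.conjStarAlgAut_apply] at h
    exact h
  have key : ∀ c : ℂ, (∏ i, ((d i : ℂ) - c)) = ∏ j, ((μ j : ℂ) - c) := by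
    intro c
    have e1 : (Z - c • 1).det = ∏ i, ((d i : ℂ) - c) := by
      rw [hZdef]; exact det_conj_diag_sub h2 _ c
    have e2 : (Z - c • 1).det = ∏ j, ((μ j : ℂ) - c) := by
      rw [hspec]; exact det_conj_diag_sub h20 _ c
    rw [← e1, e2]
  set s : Finset ℂ := (Finset.univ.image fun i => (d i : ℂ)) ∪
      (Finset.univ.image fun j => (μ j : ℂ)) with hs
  set r : ℂ → ℂ := fun z => ((z.re ^ p : ℝ) : ℂ) with hr
  set g : Polynomial ℂ := Lagrange.interpolate s id r with hg
  have hnode : ∀ z ∈ s, g.eval z = r z := by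
    intro z hz
    rw [hg]; exact Lagrange.eval_interpolate_at_node r (Set.injOn_id _) hz
  have haevaldiag : ∀ v : n → ℂ,
      aeval (Matrix.diagonal v) g = Matrix.diagonal (fun i => g.eval (v i)) := by
    intro v
    have h1 : aeval ((Matrix.diagonalAlgHom ℂ) v) g = (Matrix.diagonalAlgHom ℂ) (aeval v g) :=
      aeval_algHom_apply (Matrix.diagonalAlgHom ℂ) v g
    have h1' : aeval (Matrix.diagonal v) g = (Matrix.diagonalAlgHom ℂ) (aeval v g) := h1
    rw [h1']
    show Matrix.diagonal (aeval v g) = _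
    have h4 : (aeval v g : n → ℂ) = fun i => g.eval (v i) := by
      funext i
      have h3 : aeval (v i) g = (aeval v g) i :=
        aeval_algHom_apply (Pi.evalAlgHom ℂ (fun _ : n => ℂ) i) v g
      rw [← h3, Polynomial.coe_aeval_eq_eval]
    rw [h4]
  have c1 : aeval Z g = u * Matrix.diagonal (fun i => ((d i ^ p : ℝ) : ℂ)) * star u := by
    rw [hZdef, aeval_unitary_conj _ _ hu, haevaldiag]
    have h5 : (fun i => g.eval ((d i : ℂ))) = fun i => ((d i ^ p : ℝ) : ℂ) := by
      funext i
      rw [hnode _ (Finset.mem_union_left _ (Finset.mem_image_of_mem _ (Finset.mem_univ i))), hr]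
      simp
    rw [h5]
  have c2 : aeval Z g = u0 * Matrix.diagonal (fun j => ((μ j ^ p : ℝ) : ℂ)) * star u0 := by
    rw [hspec, aeval_unitary_conj _ _ hu0m, haevaldiag]
    have h5 : (fun j => g.eval ((μ j : ℂ))) = fun j => ((μ j ^ p : ℝ) : ℂ) := by
      funext j
      rw [hnode _ (Finset.mem_union_right _ (Finset.mem_image_of_mem _ (Finset.mem_univ j))), hr]
      simp
    rw [h5]
  have hmp : mpow Z p = u0 * Matrix.diagonal (fun j => ((μ j ^ p : ℝ) : ℂ)) * star u0 := by
    simp only [mpow, dif_pos hZ]; rfl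
  rw [hmp, ← c2, c1]

lemma mpow_spectral {Z : Matrix n n ℂ} (hZ : Z.IsHermitian) (p : ℝ) :
    mpow Z p = (hZ.eigenvectorUnitary : Matrix n n ℂ) *
      Matrix.diagonal (fun i => ((hZ.eigenvalues i ^ p : ℝ) : ℂ)) *
      star (hZ.eigenvectorUnitary : Matrix n n ℂ) := by
  simp only [mpow, dif_pos hZ]

lemma spectral_theorem' {Z : Matrix n n ℂ} (hZ : Z.IsHermitian) :
    Z = (hZ.eigenvectorUnitary : Matrix n n ℂ) *
      Matrix.diagonal (fun i => ((hZ.eigenvalues i : ℝ) : ℂ)) *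
      star (hZ.eigenvectorUnitary : Matrix n n ℂ) := by
  have h := hZ.spectral_theorem
  rw [Unitary.conjStarAlgAut_apply] at h
  exact h

lemma mpow_diagonal (d : n → ℝ) (p : ℝ) :
    mpow (Matrix.diagonal fun i => (d i : ℂ)) p
      = Matrix.diagonal fun i => ((d i ^ p : ℝ) : ℂ) := by
  have h := mpow_conj_diag (one_mem (Matrix.unitaryGroup n ℂ)) d p
  simpa using h

lemma mpow_isHermitian {Z : Matrix n n ℂ} (hZ : Z.IsHermitian) (p : ℝ) :
    (mpow Z p).IsHermitian := by
  rw [mpow_spectral hZ]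
  exact isHermitian_conj_diag _ _

lemma posDef_conj {M S : Matrix n n ℂ} (hM : M.PosDef) (hS : IsUnit S) :
    (S * M * star S).PosDef := by
  have hstar : IsUnit (star S) := hS.star
  have hherm : (S * M * star S).IsHermitian := by
    have h := Matrix.isHermitian_mul_mul_conjTranspose S hM.1
    simpa [Matrix.star_eq_conjTranspose] using h
  refine Matrix.PosDef.of_dotProduct_mulVec_pos hherm fun x hx => ?_
  have hx' : (star S) *ᵥ x ≠ 0 := by
    intro h
    exact hx (Matrix.mulVec_injective_iff_isUnit.mpr hstar (by simpa using h))
  have h := hM.dotProduct_mulVec_pos hx'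
  simpa only [star_mulVec, dotProduct_mulVec, vecMul_vecMul, Matrix.star_eq_conjTranspose,
    conjTranspose_conjTranspose, ← mul_assoc] using h

lemma unitary_isUnit {u : Matrix n n ℂ} (hu : u ∈ Matrix.unitaryGroup n ℂ) : IsUnit u :=
  ⟨⟨u, star u, mem_unitaryGroup_iff.mp hu, mem_unitaryGroup_iff'.mp hu⟩, rfl⟩

lemma mpow_posDef {Z : Matrix n n ℂ} (hZ : Z.PosDef) (p : ℝ) : (mpow Z p).PosDef := by
  rw [mpow_spectral hZ.1]
  have hd : (Matrix.diagonal fun i => ((hZ.1.eigenvalues i ^ p : ℝ) : ℂ)).PosDef :=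
    Matrix.PosDef.diagonal fun i => by
      exact_mod_cast Real.rpow_pos_of_pos (hZ.eigenvalues_pos i) p
  exact posDef_conj hd (unitary_isUnit (SetLike.coe_mem _))

lemma mpow_mul_mpow {Z : Matrix n n ℂ} (hZ : Z.PosDef) (p q : ℝ) :
    mpow Z p * mpow Z q = mpow Z (p + q) := by
  rw [mpow_spectral hZ.1, mpow_spectral hZ.1, mpow_spectral hZ.1]
  set u : Matrix n n ℂ := (hZ.1.eigenvectorUnitary : Matrix n n ℂ) with hu
  have h1 : star u * u = 1 := mem_unitaryGroup_iff'.mp (SetLike.coe_mem _)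
  set D1 := Matrix.diagonal fun i => ((hZ.1.eigenvalues i ^ p : ℝ) : ℂ)
  set D2 := Matrix.diagonal fun i => ((hZ.1.eigenvalues i ^ q : ℝ) : ℂ)
  calc (u * D1 * star u) * (u * D2 * star u)
      = u * (D1 * (star u * u) * D2) * star u := by noncomm_ring
    _ = u * (D1 * D2) * star u := by rw [h1]; noncomm_ring
    _ = _ := by
        have hfun : (fun i => ((hZ.1.eigenvalues i ^ p : ℝ) : ℂ) * ((hZ.1.eigenvalues i ^ q : ℝ) : ℂ))
            = fun i => ((hZ.1.eigenvalues i ^ (p + q) : ℝ) : ℂ) := by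
          funext i
          rw [← Complex.ofReal_mul, ← Real.rpow_add (hZ.eigenvalues_pos i)]
        rw [Matrix.diagonal_mul_diagonal, hfun]

lemma mpow_one' {Z : Matrix n n ℂ} (hZ : Z.IsHermitian) : mpow Z 1 = Z := by
  rw [mpow_spectral hZ]
  simp only [Real.rpow_one]
  exact (spectral_theorem' hZ).symm

lemma mpow_zero' {Z : Matrix n n ℂ} (hZ : Z.IsHermitian) : mpow Z 0 = 1 := by
  rw [mpow_spectral hZ]
  simp only [Real.rpow_zero, Complex.ofReal_one]
  rw [Matrix.diagonal_one, mul_one]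
  exact mem_unitaryGroup_iff.mp (SetLike.coe_mem _)

lemma mpow_half_cancel {Z : Matrix n n ℂ} (hZ : Z.PosDef) :
    mpow Z (1/2) * mpow Z (-(1/2)) = 1 := by
  rw [mpow_mul_mpow hZ, show (1/2 + -(1/2) : ℝ) = 0 by norm_num, mpow_zero' hZ.1]

lemma mpow_half_cancel' {Z : Matrix n n ℂ} (hZ : Z.PosDef) :
    mpow Z (-(1/2)) * mpow Z (1/2) = 1 := by
  rw [mpow_mul_mpow hZ, show (-(1/2) + 1/2 : ℝ) = 0 by norm_num, mpow_zero' hZ.1]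

lemma mpow_half_sq {Z : Matrix n n ℂ} (hZ : Z.PosDef) :
    mpow Z (1/2) * mpow Z (1/2) = Z := by
  rw [mpow_mul_mpow hZ, show (1/2 + 1/2 : ℝ) = 1 by norm_num, mpow_one' hZ.1]

set_option maxHeartbeats 2000000 in
lemma sharp_conj (t : ℝ) {X Y S : Matrix n n ℂ} (hX : X.PosDef) (hY : Y.PosDef)
    (hS : IsUnit S) :
    sharp t (S * X * star S) (S * Y * star S) = S * sharp t X Y * star S := by
  have hC : (S * X * star S).PosDef := posDef_conj hX hS
  simp only [sharp]
  set C := S * X * star S with hCdef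
  set X2 := mpow X (1/2) with hX2
  set X2' := mpow X (-(1/2)) with hX2'
  set C2 := mpow C (1/2) with hC2
  set C2' := mpow C (-(1/2)) with hC2'
  have hX2X2 : X2 * X2 = X := mpow_half_sq hX
  have hX2X2' : X2 * X2' = 1 := mpow_half_cancel hX
  have hX2'X2 : X2' * X2 = 1 := mpow_half_cancel' hX
  have hC2C2' : C2 * C2' = 1 := mpow_half_cancel hC
  have hC2'C2 : C2' * C2 = 1 := mpow_half_cancel' hC
  have hstarX2 : star X2 = X2 := mpow_isHermitian hX.1 _
  have hstarC2' : star C2' = C2' := mpow_isHermitian hC.1 _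
  have hC2'CC2' : C2' * C * C2' = 1 := by
    have hsq : C = C2 * C2 := (mpow_half_sq hC).symm
    calc C2' * C * C2' = (C2' * C2) * (C2 * C2') := by rw [hsq]; noncomm_ring
      _ = 1 := by rw [hC2'C2, hC2C2', one_mul]
  set R := C2' * S * X2 with hR
  have hstarR : star R = X2 * star S * C2' := by
    rw [hR, StarMul.star_mul, StarMul.star_mul, hstarX2, hstarC2', mul_assoc]
  have hRu : R ∈ Matrix.unitaryGroup n ℂ := by
    rw [mem_unitaryGroup_iff, hstarR]
    calc (C2' * S * X2) * (X2 * star S * C2')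
        = C2' * (S * (X2 * X2) * star S) * C2' := by noncomm_ring
      _ = C2' * C * C2' := by rw [hX2X2]
      _ = 1 := hC2'CC2'
  set N := X2' * Y * X2' with hN
  have hNpd : N.PosDef := by
    have hpd : X2'.PosDef := mpow_posDef hX _
    have h1 : star X2' = X2' := mpow_isHermitian hX.1 _
    have h2 := posDef_conj hY hpd.isUnit
    rwa [h1] at h2
  have hkey : C2' * (S * Y * star S) * C2' = R * N * star R := by
    rw [hstarR, hR, hN]
    calc C2' * (S * Y * star S) * C2'
        = C2' * S * 1 * Y * 1 * star S * C2' := by noncomm_ring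
      _ = C2' * S * (X2 * X2') * Y * (X2' * X2) * star S * C2' := by rw [hX2X2', hX2'X2]
      _ = C2' * S * X2 * (X2' * Y * X2') * (X2 * star S * C2') := by noncomm_ring
  have hmp : mpow (R * N * star R) t = R * mpow N t * star R := by
    set u1 : Matrix n n ℂ := (hNpd.1.eigenvectorUnitary : Matrix n n ℂ) with hu1def
    have hu1 : u1 ∈ Matrix.unitaryGroup n ℂ := SetLike.coe_mem _
    have hRu1 : R * u1 ∈ Matrix.unitaryGroup n ℂ := mul_mem hRu hu1
    have h1 : R * N * star R = (R * u1) *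
        Matrix.diagonal (fun i => ((hNpd.1.eigenvalues i : ℝ) : ℂ)) * star (R * u1) := by
      conv_lhs => rw [spectral_theorem' hNpd.1]
      rw [show star (R * u1) = star u1 * star R from StarMul.star_mul R u1]
      noncomm_ring
    rw [h1, mpow_conj_diag hRu1, mpow_spectral hNpd.1,
      show star (R * u1) = star u1 * star R from StarMul.star_mul R u1]
    noncomm_ring
  rw [hkey, hmp, hstarR, hR]
  calc C2 * (C2' * S * X2 * mpow N t * (X2 * star S * C2')) * C2
      = (C2 * C2') * (S * (X2 * mpow N t * X2) * star S) * (C2' * C2) := by noncomm_ring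
    _ = S * (X2 * mpow N t * X2) * star S := by rw [hC2C2', hC2'C2, one_mul, mul_one]

lemma sharp_diagonal (t : ℝ) (a b : n → ℝ) :
    sharp t (Matrix.diagonal fun i => (a i : ℂ)) (Matrix.diagonal fun i => (b i : ℂ))
      = Matrix.diagonal fun i =>
          (((a i ^ ((1:ℝ)/2)) * ((a i ^ (-(1/2) : ℝ) * b i * a i ^ (-(1/2) : ℝ)) ^ t)
            * (a i ^ ((1:ℝ)/2)) : ℝ) : ℂ) := by
  simp only [sharp, mpow_diagonal]
  rw [Matrix.diagonal_mul_diagonal, Matrix.diagonal_mul_diagonal]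
  have h1 : (fun i => ((a i ^ (-(1/2) : ℝ) : ℝ) : ℂ) * (b i : ℂ) * ((a i ^ (-(1/2) : ℝ) : ℝ) : ℂ))
      = fun i => ((a i ^ (-(1/2) : ℝ) * b i * a i ^ (-(1/2) : ℝ) : ℝ) : ℂ) := by
    funext i; push_cast; ring
  rw [h1, mpow_diagonal, Matrix.diagonal_mul_diagonal, Matrix.diagonal_mul_diagonal]
  have h2 : (fun i => ((a i ^ ((1:ℝ)/2) : ℝ) : ℂ)
        * ((((a i ^ (-(1/2) : ℝ) * b i * a i ^ (-(1/2) : ℝ)) ^ t : ℝ)) : ℂ)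
        * ((a i ^ ((1:ℝ)/2) : ℝ) : ℂ))
      = fun i => (((a i ^ ((1:ℝ)/2)) * ((a i ^ (-(1/2) : ℝ) * b i * a i ^ (-(1/2) : ℝ)) ^ t)
            * (a i ^ ((1:ℝ)/2)) : ℝ) : ℂ) := by
    funext i; push_cast; ring
  rw [show ((1:ℝ)/2) = (1/2 : ℝ) by norm_num] at *
  rw [h2]

lemma det_conj_form {A2 u : Matrix n n ℂ} (h2 : u * star u = 1) (f : n → ℝ) :
    (A2 * (u * Matrix.diagonal (fun i => (f i : ℂ)) * star u) * A2).det
      = (A2 * A2).det * ∏ i, (f i : ℂ) := by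
  have hdu : u.det * (star u).det = 1 := by rw [← det_mul, h2, det_one]
  calc (A2 * (u * Matrix.diagonal (fun i => (f i : ℂ)) * star u) * A2).det
      = A2.det * (u.det * (Matrix.diagonal fun i => (f i : ℂ)).det * (star u).det) * A2.det := by
        rw [det_mul, det_mul, det_mul, det_mul]
    _ = (A2.det * A2.det) * (u.det * (star u).det)
          * (Matrix.diagonal fun i => (f i : ℂ)).det := by ring
    _ = (A2 * A2).det * ∏ i, (f i : ℂ) := by
        rw [hdu, det_mul, det_diagonal, mul_one]

lemma det_re_conj_form {A2 u A : Matrix n n ℂ} (hAA : A2 * A2 = A)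
    (h2 : u * star u = 1) {adet : ℝ} (hadet : A.det = (adet : ℂ)) (f : n → ℝ) :
    (A2 * (u * Matrix.diagonal (fun i => (f i : ℂ)) * star u) * A2).det.re
      = adet * ∏ i, f i := by
  rw [det_conj_form h2, hAA, hadet, ← Complex.ofReal_prod, ← Complex.ofReal_mul,
    Complex.ofReal_re]

lemma conj_form_add {A2 u : Matrix n n ℂ} (f g : n → ℝ) :
    A2 * (u * Matrix.diagonal (fun i => (f i : ℂ)) * star u) * A2
      + A2 * (u * Matrix.diagonal (fun i => (g i : ℂ)) * star u) * A2
      = A2 * (u * Matrix.diagonal (fun i => ((f i + g i : ℝ) : ℂ)) * star u) * A2 := by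
  have h : (fun i => ((f i + g i : ℝ) : ℂ))
      = fun i => ((f i : ℂ) + (g i : ℂ)) := by funext i; push_cast; ring
  rw [h, ← Matrix.diagonal_add]
  noncomm_ring

lemma two_matrix_inv : (2 : Matrix n n ℂ)⁻¹ = (2:ℂ)⁻¹ • (1 : Matrix n n ℂ) := by
  apply Matrix.inv_eq_right_inv
  have h2 : (2 : Matrix n n ℂ) = (2:ℂ) • 1 := by
    rw [two_smul]; norm_num
  rw [h2, smul_mul_smul_comm]
  norm_num

lemma conj_form_half {A2 u : Matrix n n ℂ} (f : n → ℝ) :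
    (A2 * (u * Matrix.diagonal (fun i => (f i : ℂ)) * star u) * A2) / 2
      = A2 * (u * Matrix.diagonal (fun i => ((f i / 2 : ℝ) : ℂ)) * star u) * A2 := by
  rw [div_eq_mul_inv, two_matrix_inv, mul_smul_comm, mul_one]
  have h : (fun i => ((f i / 2 : ℝ) : ℂ)) = fun i => (2:ℂ)⁻¹ • ((f i : ℝ) : ℂ) := by
    funext i; simp only [smul_eq_mul]; push_cast; ring
  have h' : (fun i => (2:ℂ)⁻¹ • ((f i : ℝ) : ℂ)) = (2:ℂ)⁻¹ • (fun i => ((f i : ℝ) : ℂ)) := rfl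
  rw [h, h', Matrix.diagonal_smul]
  simp only [mul_smul_comm, smul_mul_assoc]

lemma scalar_core {l s : ℝ} (hl : 0 < l) (hs : 0 < s) (hkey : l * (1+s)^2 ≤ s * (1+l)^2) :
    Real.log ((1+s)/2) - 1/2 * Real.log s ≤ Real.log ((1+l)/2) - 1/2 * Real.log l := by
  have h1s : (0:ℝ) < 1 + s := by linarith
  have h1l : (0:ℝ) < 1 + l := by linarith
  have hlog : Real.log (l * (1+s)^2) ≤ Real.log (s * (1+l)^2) :=
    Real.log_le_log (by positivity) hkey
  rw [Real.log_mul (ne_of_gt hl) (by positivity), Real.log_mul (ne_of_gt hs) (by positivity),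
    Real.log_pow, Real.log_pow] at hlog
  rw [Real.log_div (ne_of_gt h1s) two_ne_zero, Real.log_div (ne_of_gt h1l) two_ne_zero]
  push_cast at hlog
  linarith

lemma sigma_le {l t : ℝ} (hl : 0 < l) (ht0 : 0 ≤ t) (ht1 : t ≤ 1)
    {s : ℝ} (hsdef : s = l ^ ((1-t)/2 : ℝ) * ((1+l)/2) ^ t) :
    Real.log ((1+s)/2) - 1/2 * Real.log s ≤ Real.log ((1+l)/2) - 1/2 * Real.log l := by
  have hm : (0:ℝ) < (1+l)/2 := by linarith
  have hs : 0 < s := by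
    rw [hsdef]
    exact mul_pos (Real.rpow_pos_of_pos hl _) (Real.rpow_pos_of_pos hm _)
  apply scalar_core hl hs
  have hmain : (l - s) * (1 - s * l) ≤ 0 := by
    rcases le_total 1 l with h | h
    · have hm1 : (1:ℝ) ≤ (1+l)/2 := by linarith
      have hml : (1+l)/2 ≤ l := by linarith
      have hs1 : 1 ≤ s := by
        rw [hsdef]
        have a1 : (1:ℝ) ≤ l ^ ((1-t)/2 : ℝ) := Real.one_le_rpow h (by linarith)
        have a2 : (1:ℝ) ≤ ((1+l)/2) ^ t := Real.one_le_rpow hm1 ht0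
        nlinarith
      have hsl : s ≤ l := by
        rw [hsdef]
        calc l ^ ((1-t)/2 : ℝ) * ((1+l)/2) ^ t ≤ l ^ ((1-t)/2 : ℝ) * l ^ t :=
              mul_le_mul_of_nonneg_left (Real.rpow_le_rpow hm.le hml ht0)
                (Real.rpow_nonneg hl.le _)
          _ = l ^ ((1-t)/2 + t : ℝ) := (Real.rpow_add hl _ _).symm
          _ ≤ l ^ (1:ℝ) := Real.rpow_le_rpow_of_exponent_le h (by linarith)
          _ = l := Real.rpow_one l
      exact mul_nonpos_iff.mpr (Or.inl ⟨by linarith, by nlinarith⟩)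
    · have hm1 : (1+l)/2 ≤ 1 := by linarith
      have hlm : l ≤ (1+l)/2 := by linarith
      have hs1 : s ≤ 1 := by
        rw [hsdef]
        have a1 : l ^ ((1-t)/2 : ℝ) ≤ 1 := Real.rpow_le_one hl.le h (by linarith)
        have a2 : ((1+l)/2) ^ t ≤ 1 := Real.rpow_le_one (by linarith) hm1 ht0
        nlinarith [Real.rpow_nonneg hl.le ((1-t)/2), Real.rpow_nonneg (le_of_lt hm) t]
      have hls : l ≤ s := by
        rw [hsdef]
        calc l = l ^ (1:ℝ) := (Real.rpow_one l).symm
          _ ≤ l ^ ((1-t)/2 + t : ℝ) := Real.rpow_le_rpow_of_exponent_ge hl h (by linarith)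
          _ = l ^ ((1-t)/2 : ℝ) * l ^ t := Real.rpow_add hl _ _
          _ ≤ l ^ ((1-t)/2 : ℝ) * ((1+l)/2) ^ t :=
              mul_le_mul_of_nonneg_left (Real.rpow_le_rpow hl.le hlm ht0)
                (Real.rpow_nonneg hl.le _)
      exact mul_nonpos_iff.mpr (Or.inr ⟨by linarith, by nlinarith⟩)
  nlinarith [hmain]

lemma sigma_eq {l t : ℝ} (hl : 0 < l) :
    (l ^ ((1:ℝ)/2)) ^ ((1:ℝ)/2)
      * (((l ^ ((1:ℝ)/2)) ^ (-(1/2) : ℝ) * ((1+l)/2) * (l ^ ((1:ℝ)/2)) ^ (-(1/2) : ℝ)) ^ t)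
      * (l ^ ((1:ℝ)/2)) ^ ((1:ℝ)/2)
      = l ^ ((1-t)/2 : ℝ) * ((1+l)/2) ^ t := by
  have hm : (0:ℝ) ≤ (1+l)/2 := by linarith
  have h1 : (l ^ ((1:ℝ)/2)) ^ ((1:ℝ)/2) = l ^ ((1:ℝ)/4) := by
    rw [← Real.rpow_mul hl.le]; norm_num
  have h2 : (l ^ ((1:ℝ)/2)) ^ (-(1/2) : ℝ) = l ^ (-(1/4) : ℝ) := by
    rw [← Real.rpow_mul hl.le]; norm_num
  rw [h1, h2]
  rw [show l ^ (-(1/4) : ℝ) * ((1+l)/2) * l ^ (-(1/4) : ℝ)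
      = (l ^ (-(1/4) : ℝ) * l ^ (-(1/4) : ℝ)) * ((1+l)/2) by ring]
  rw [← Real.rpow_add hl, show (-(1/4) + -(1/4) : ℝ) = -(1/2) by norm_num]
  rw [Real.mul_rpow (Real.rpow_nonneg hl.le _) hm]
  rw [← Real.rpow_mul hl.le]
  rw [show l ^ ((1:ℝ)/4) * (l ^ (-(1/2) * t : ℝ) * ((1+l)/2) ^ t) * l ^ ((1:ℝ)/4)
      = (l ^ ((1:ℝ)/4) * l ^ (-(1/2) * t : ℝ) * l ^ ((1:ℝ)/4)) * ((1+l)/2) ^ t by ring]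
  congr 1
  rw [← Real.rpow_add hl, ← Real.rpow_add hl]
  congr 1
  ring

lemma dl_sum_form {adet : ℝ} (ha : 0 < adet) (f : n → ℝ) (hpos : ∀ i, 0 < f i) :
    Real.log (adet * ∏ i, ((1 + f i)/2)) - 1/2 * (Real.log adet + Real.log (adet * ∏ i, f i))
      = ∑ i, (Real.log ((1 + f i)/2) - 1/2 * Real.log (f i)) := by
  have h1 : ∀ i ∈ Finset.univ (α := n), f i ≠ 0 := fun i _ => (hpos i).ne'
  have h2 : ∀ i ∈ Finset.univ (α := n), (1 + f i)/2 ≠ 0 := fun i _ => by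
    have := hpos i; positivity
  rw [Real.log_mul ha.ne' (Finset.prod_ne_zero_iff.mpr h2),
      Real.log_mul ha.ne' (Finset.prod_ne_zero_iff.mpr h1),
      Real.log_prod h2, Real.log_prod h1, Finset.sum_sub_distrib, ← Finset.mul_sum]
  ring

theorem stmt17' {A B : Matrix n n ℂ} (hA : A.PosDef) (hB : B.PosDef)
    {t : ℝ} (ht0 : 0 ≤ t) (ht1 : t ≤ 1) :
    dl A (sharp t (sharp (1/2) A B) ((A + B) / 2)) ≤ dl A B := by
  classical
  set A2 := mpow A (1/2) with hA2def
  set A2' := mpow A (-(1/2)) with hA2'def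
  have hA2pd : A2.PosDef := mpow_posDef hA _
  have hA2'pd : A2'.PosDef := mpow_posDef hA _
  have hc1 : A2 * A2' = 1 := mpow_half_cancel hA
  have hc2 : A2' * A2 = 1 := mpow_half_cancel' hA
  have hAA : A2 * A2 = A := mpow_half_sq hA
  have hstarA2 : star A2 = A2 := mpow_isHermitian hA.1 _
  have hstarA2' : star A2' = A2' := mpow_isHermitian hA.1 _
  set T := A2' * B * A2' with hTdef
  have hTpd : T.PosDef := by
    have h := posDef_conj hB hA2'pd.isUnit
    rwa [hstarA2'] at h
  set u : Matrix n n ℂ := (hTpd.1.eigenvectorUnitary : Matrix n n ℂ) with hudef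
  have hum : u ∈ Matrix.unitaryGroup n ℂ := SetLike.coe_mem _
  have h2u : u * star u = 1 := mem_unitaryGroup_iff.mp hum
  set lam := hTpd.1.eigenvalues with hlamdef
  have hlam : ∀ i, 0 < lam i := hTpd.eigenvalues_pos
  have hTspec : T = u * Matrix.diagonal (fun i => ((lam i : ℝ) : ℂ)) * star u :=
    spectral_theorem' hTpd.1
  have hBconj : B = A2 * (u * Matrix.diagonal (fun i => ((lam i : ℝ) : ℂ)) * star u) * A2 := by
    have hBeq : B = A2 * T * A2 := by
      calc B = (A2 * A2') * B * (A2' * A2) := by rw [hc1, hc2]; noncomm_ring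
        _ = A2 * (A2' * B * A2') * A2 := by noncomm_ring
        _ = A2 * T * A2 := by rw [← hTdef]
    rw [hBeq, hTspec]
  have hAconj : A = A2 * (u * Matrix.diagonal (fun i => (((1:ℝ) : ℝ) : ℂ)) * star u) * A2 := by
    have h1 : (fun _ : n => (((1:ℝ) : ℝ) : ℂ)) = fun _ : n => (1 : ℂ) := by
      funext i; norm_num
    rw [h1, Matrix.diagonal_one, mul_one, h2u, mul_one, hAA]
  -- X = sharp (1/2) A B
  have hmpT : mpow T (1/2)
      = u * Matrix.diagonal (fun i => ((lam i ^ ((1:ℝ)/2) : ℝ) : ℂ)) * star u := by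
    conv_lhs => rw [hTspec]
    exact mpow_conj_diag hum _ _
  have hX : sharp (1/2) A B
      = A2 * (u * Matrix.diagonal (fun i => ((lam i ^ ((1:ℝ)/2) : ℝ) : ℂ)) * star u) * A2 := by
    rw [show sharp (1/2) A B = A2 * mpow (A2' * B * A2') (1/2) * A2 from rfl, ← hTdef, hmpT]
  have hYform : (A + B)/2
      = A2 * (u * Matrix.diagonal (fun i => (((1 + lam i)/2 : ℝ) : ℂ)) * star u) * A2 := by
    conv_lhs => rw [hAconj, hBconj]
    rw [conj_form_add, conj_form_half]
  -- inner and outer congruence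
  have hD1pd : (Matrix.diagonal fun i => ((lam i ^ ((1:ℝ)/2) : ℝ) : ℂ)).PosDef :=
    Matrix.PosDef.diagonal fun i => by
      exact_mod_cast Real.rpow_pos_of_pos (hlam i) _
  have hD2pd : (Matrix.diagonal fun i => (((1 + lam i)/2 : ℝ) : ℂ)).PosDef :=
    Matrix.PosDef.diagonal fun i => by
      have := hlam i
      exact_mod_cast by positivity
  have hXin : (u * Matrix.diagonal (fun i => ((lam i ^ ((1:ℝ)/2) : ℝ) : ℂ)) * star u).PosDef :=
    posDef_conj hD1pd (unitary_isUnit hum)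
  have hYin : (u * Matrix.diagonal (fun i => (((1 + lam i)/2 : ℝ) : ℂ)) * star u).PosDef :=
    posDef_conj hD2pd (unitary_isUnit hum)
  have houter := sharp_conj t hXin hYin hA2pd.isUnit
  rw [hstarA2] at houter
  have hinner := sharp_conj t hD1pd hD2pd (unitary_isUnit hum)
  set sig : n → ℝ := fun i => lam i ^ ((1-t)/2 : ℝ) * ((1 + lam i)/2) ^ t with hsigdef
  have hsigpos : ∀ i, 0 < sig i := fun i =>
    mul_pos (Real.rpow_pos_of_pos (hlam i) _)
      (Real.rpow_pos_of_pos (by have := hlam i; linarith) _)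
  have hSt : sharp t (sharp (1/2) A B) ((A + B) / 2)
      = A2 * (u * Matrix.diagonal (fun i => ((sig i : ℝ) : ℂ)) * star u) * A2 := by
    rw [hX, hYform, houter, hinner, sharp_diagonal]
    have hfun : (fun i =>
        (((lam i ^ ((1:ℝ)/2)) ^ ((1:ℝ)/2)
          * (((lam i ^ ((1:ℝ)/2)) ^ (-(1/2) : ℝ) * ((1 + lam i)/2)
              * (lam i ^ ((1:ℝ)/2)) ^ (-(1/2) : ℝ)) ^ t)
          * (lam i ^ ((1:ℝ)/2)) ^ ((1:ℝ)/2) : ℝ) : ℂ))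
        = fun i => ((sig i : ℝ) : ℂ) := by
      funext i
      rw [hsigdef]
      norm_cast
      rw [sigma_eq (hlam i)]
    rw [hfun]
  -- determinant values
  set adet : ℝ := ∏ i, hA.1.eigenvalues i with hadef
  have hapos : 0 < adet := Finset.prod_pos fun i _ => hA.eigenvalues_pos i
  have hadetC : A.det = (adet : ℂ) := by
    rw [hA.1.det_eq_prod_eigenvalues, hadef]
    push_cast
    rfl
  have v3 : A.det.re = adet := by rw [hadetC, Complex.ofReal_re]
  have v2 : B.det.re = adet * ∏ i, lam i := by
    rw [hBconj]; exact det_re_conj_form hAA h2u hadetC _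
  have v1 : ((A + B)/2).det.re = adet * ∏ i, ((1 + lam i)/2) := by
    rw [hYform]; exact det_re_conj_form hAA h2u hadetC _
  have hStY : (A + sharp t (sharp (1/2) A B) ((A + B) / 2))/2
      = A2 * (u * Matrix.diagonal (fun i => (((1 + sig i)/2 : ℝ) : ℂ)) * star u) * A2 := by
    rw [hSt]
    conv_lhs => rw [hAconj]
    rw [conj_form_add, conj_form_half]
  have v4 : ((A + sharp t (sharp (1/2) A B) ((A + B) / 2))/2).det.re
      = adet * ∏ i, ((1 + sig i)/2) := by
    rw [hStY]; exact det_re_conj_form hAA h2u hadetC _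
  have v5 : (sharp t (sharp (1/2) A B) ((A + B) / 2)).det.re = adet * ∏ i, sig i := by
    rw [hSt]; exact det_re_conj_form hAA h2u hadetC _
  simp only [dl]
  rw [v1, v2, v3, v4, v5, dl_sum_form hapos lam hlam, dl_sum_form hapos sig hsigpos]
  exact Finset.sum_le_sum fun i _ => sigma_le (hlam i) ht0 ht1 rfl

end Aux

theorem stmt17 {n : Type*} [Fintype n] [DecidableEq n]
    {A B : Matrix n n ℂ} (hA : A.PosDef) (hB : B.PosDef)
    {t : ℝ} (ht0 : 0 ≤ t) (ht1 : t ≤ 1) :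
    dl A (sharp t (sharp (1/2) A B) ((A + B) / 2)) ≤ dl A B :=
  stmt17' hA hB ht0 ht1
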